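/- Let p, q, r ∈ (1,∞) satisfy 1/p + 1/q + 1/r = 2, and fix functions Θ, R with Θ(ρ) → 0 as ρ → ∞ and R(t) → ∞ as t → 0. For every ε > 0 there exists η_0 > 0 such that for every η ∈ (0, η_0] there exists δ_0 > 0 with the following property: for all δ ∈ (0, δ_0], every nonnegative f ∈ L^p(ℝ) with ‖f‖_p = 1 which is δ-normalized with exponent p with respect to Θ, R, and every nonnegative Gaussian 𝓕 which is the first component of an extremizing triple and satisfies ‖f^⋆ − 𝓕‖_p ≤ δ, one has ‖min(f, η)‖_p + ‖max(0, f − (‖𝓕‖_∞ − η))‖_p ≤ ε. (Equivalently, ‖∫_{α ∉ [η, ‖𝓕‖_∞ − η]} 1_{F_α} dα‖_p ≤ ε, where F_α = {x : f(x) > α}.) The corresponding statements hold for the second and third components with exponents q and r respectively. -/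

import Mathlib

open MeasureTheory Filter Metric Set
noncomputable section

/-- Convolution of real-valued functions on ℝ. -/
def conv (f g : ℝ → ℝ) : ℝ → ℝ := fun x => ∫ y, f (x - y) * g y

/-- The pairing ⟨u,v⟩ = ∫ u v. -/
def pairing (u v : ℝ → ℝ) : ℝ := ∫ x, u x * v x

/-- The L^s(ℝ) norm (real-valued). -/
def nrm (s : ℝ) (f : ℝ → ℝ) : ℝ := (eLpNorm f (ENNReal.ofReal s) volume).toReal

/-- The L^∞(ℝ) norm (real-valued). -/
def nrmInf (f : ℝ → ℝ) : ℝ := (eLpNorm f ⊤ volume).toReal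

/-- C_s = (s^{1/s}/(s')^{1/s'})^{1/2} where s' = s/(s-1). -/
def Cst (s : ℝ) : ℝ := Real.sqrt ((s ^ (1/s)) / ((s/(s-1)) ^ (1/(s/(s-1)))))

/-- The sharp Young constant A_{p,q,r} = C_p C_q C_r. -/
def Apqr (p q r : ℝ) : ℝ := Cst p * Cst q * Cst r

/-- f is η-normalized with exponent p with respect to Θ, R. -/
def IsNormalized (Θ Rf : ℝ → ℝ) (p η : ℝ) (f : ℝ → ℝ) : Prop :=
  (eLpNorm f (ENNReal.ofReal p) volume).toReal = 1 ∧
  ∀ ρ : ℝ, 0 < ρ → ρ ≤ Rf η →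
    (∫ x in {x : ℝ | ρ < |f x|}, |f x| ^ p) ≤ Θ ρ ∧
    (∫ x in {x : ℝ | |f x| < ρ⁻¹}, |f x| ^ p) ≤ Θ ρ

/-- An extremizing triple for sharp Young's inequality on ℝ. -/
def ExtremizingTriple (p q r : ℝ) (F G H : ℝ → ℝ) : Prop :=
  MemLp F (ENNReal.ofReal p) volume ∧ MemLp G (ENNReal.ofReal q) volume ∧
  MemLp H (ENNReal.ofReal r) volume ∧
  nrm p F ≠ 0 ∧ nrm q G ≠ 0 ∧ nrm r H ≠ 0 ∧
  pairing (conv F G) H = Apqr p q r * nrm p F * nrm q G * nrm r H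

/-- fs is (a.e. version of) the symmetric nonincreasing rearrangement of f:
nonnegative, symmetric nonincreasing, and equimeasurable with f. -/
def IsRearrangement (f fs : ℝ → ℝ) : Prop :=
  (∀ x, 0 ≤ fs x) ∧ (∀ x y : ℝ, |x| ≤ |y| → fs y ≤ fs x) ∧
  (∀ t : ℝ, 0 < t → volume {x : ℝ | t < fs x} = volume {x : ℝ | t < f x})

/-- F is a (nonnegative) Gaussian on ℝ. -/
def IsGaussian (F : ℝ → ℝ) : Prop :=
  ∃ c lam a : ℝ, 0 < c ∧ 0 < lam ∧ ∀ x, F x = c * Real.exp (-(lam * (x - a)^2))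

namespace YoungAux
open scoped ENNReal NNReal

noncomputable def Ip (p : ℝ) (g : ℝ → ℝ) : ℝ≥0∞ := ∫⁻ x, ENNReal.ofReal (g x ^ p)

lemma enorm_of_nonneg {x : ℝ} (hx : 0 ≤ x) : (‖x‖₊ : ℝ≥0∞) = ENNReal.ofReal x := by
  simp [← enorm_eq_nnnorm, ← ofReal_norm, Real.norm_eq_abs, abs_of_nonneg hx]

lemma enorm_abs (x : ℝ) : (‖x‖₊ : ℝ≥0∞) = ENNReal.ofReal |x| := by
  simp [← enorm_eq_nnnorm, ← ofReal_norm, Real.norm_eq_abs]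

lemma ofReal_ne_zero_of_pos {p : ℝ} (hp : 0 < p) : ENNReal.ofReal p ≠ 0 := by
  simp [ENNReal.ofReal_eq_zero, not_le, hp]

lemma eLpNorm_eq_Ip {p : ℝ} (hp : 0 < p) (g : ℝ → ℝ) (hg : ∀ x, 0 ≤ g x) :
    eLpNorm g (ENNReal.ofReal p) volume = Ip p g ^ (1 / p) := by
  rw [eLpNorm_eq_lintegral_rpow_enorm_toReal (ofReal_ne_zero_of_pos hp) ENNReal.ofReal_ne_top,
    ENNReal.toReal_ofReal hp.le]
  congr 1
  refine lintegral_congr fun x => ?_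
  rw [enorm_eq_nnnorm, enorm_of_nonneg (hg x), ENNReal.ofReal_rpow_of_nonneg (hg x) hp.le]

lemma Ip_eq_one {p : ℝ} (hp : 0 < p) {g : ℝ → ℝ} (hg : ∀ x, 0 ≤ g x)
    (hmem : MemLp g (ENNReal.ofReal p) volume)
    (h1 : (eLpNorm g (ENNReal.ofReal p) volume).toReal = 1) : Ip p g = 1 := by
  have h2 : eLpNorm g (ENNReal.ofReal p) volume = 1 := by
    rw [← ENNReal.ofReal_toReal hmem.2.ne, h1, ENNReal.ofReal_one]
  have h3 : Ip p g ^ (1 / p) = 1 := (eLpNorm_eq_Ip hp g hg).symm.trans h2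
  have h4 := congrArg (· ^ p) h3
  simpa [one_div, ENNReal.rpow_inv_rpow hp.ne', ENNReal.one_rpow] using h4

lemma cheb {p : ℝ} (hp : 0 < p) {g : ℝ → ℝ}
    (hmeas : AEMeasurable g volume) {t : ℝ} (ht : 0 < t) :
    ENNReal.ofReal (t ^ p) * volume {x | t ≤ g x} ≤ Ip p g := by
  have h1 : {x : ℝ | t ≤ g x} ⊆ {x | ENNReal.ofReal (t ^ p) ≤ ENNReal.ofReal (g x ^ p)} :=
    fun x hx => ENNReal.ofReal_le_ofReal (Real.rpow_le_rpow ht.le hx hp.le)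
  calc ENNReal.ofReal (t ^ p) * volume {x | t ≤ g x}
      ≤ ENNReal.ofReal (t ^ p) * volume {x | ENNReal.ofReal (t ^ p) ≤ ENNReal.ofReal (g x ^ p)} :=
        mul_le_mul_right (measure_mono h1) _
    _ ≤ Ip p g := mul_meas_ge_le_lintegral₀ ((hmeas.pow_const p).ennreal_ofReal) _

lemma Ip_congr_of_equimeasurable {p : ℝ} (hp : 0 < p) {g h : ℝ → ℝ}
    (hg0 : ∀ x, 0 ≤ g x) (hh0 : ∀ x, 0 ≤ h x)
    (hgm : AEMeasurable g volume) (hhm : AEMeasurable h volume)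
    (heq : ∀ t : ℝ, 0 < t → volume {x | t < g x} = volume {x | t < h x}) :
    Ip p g = Ip p h := by
  unfold Ip
  rw [lintegral_rpow_eq_lintegral_meas_lt_mul volume (ae_of_all _ hg0) hgm hp,
    lintegral_rpow_eq_lintegral_meas_lt_mul volume (ae_of_all _ hh0) hhm hp]
  congr 1
  refine setLIntegral_congr_fun measurableSet_Ioi (fun t ht => ?_)
  rw [heq t ht]

lemma measurable_of_symm_decreasing {fs : ℝ → ℝ} (h : ∀ x y : ℝ, |x| ≤ |y| → fs y ≤ fs x) :
    Measurable fs := by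
  have habs : ∀ x : ℝ, fs |x| = fs x := fun x =>
    le_antisymm (h x |x| (by simp)) (h |x| x (by simp))
  have hg : Antitone (fun t : ℝ => fs (max t 0)) := fun s t hst => by
    refine h _ _ ?_
    rw [abs_of_nonneg (le_max_right _ _), abs_of_nonneg (le_max_right _ _)]
    exact max_le_max hst le_rfl
  have heq : fs = (fun t : ℝ => fs (max t 0)) ∘ (fun x : ℝ => |x|) := by
    funext x
    simp only [Function.comp]
    rw [max_eq_left (abs_nonneg x), habs]
  rw [heq]; exact hg.measurable.comp measurable_abs

lemma gauss_pow {c lam : ℝ} (hc : 0 < c) (m : ℝ) (a x : ℝ) :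
    (c * Real.exp (-(lam * (x - a) ^ 2))) ^ m
      = c ^ m * Real.exp (-(m * lam) * (x - a) ^ 2) := by
  rw [Real.mul_rpow hc.le (Real.exp_nonneg _), Real.rpow_def_of_pos (Real.exp_pos _),
    Real.log_exp, show -(lam * (x - a) ^ 2) * m = -(m * lam) * (x - a) ^ 2 from by ring]

lemma lintegral_gauss {b : ℝ} (hb : 0 < b) (c a : ℝ) (hc : 0 ≤ c) :
    ∫⁻ x : ℝ, ENNReal.ofReal (c * Real.exp (-b * (x - a) ^ 2))
      = ENNReal.ofReal (c * Real.sqrt (Real.pi / b)) := by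
  have hint : Integrable (fun x : ℝ => c * Real.exp (-b * (x - a) ^ 2)) volume :=
    ((integrable_exp_neg_mul_sq hb).comp_sub_right a).const_mul c
  rw [← ofReal_integral_eq_lintegral_ofReal hint
    (ae_of_all _ fun x => mul_nonneg hc (Real.exp_nonneg _))]
  congr 1
  rw [MeasureTheory.integral_const_mul]
  congr 1
  rw [show (fun x : ℝ => Real.exp (-b * (x - a) ^ 2))
      = fun x => (fun y => Real.exp (-b * y ^ 2)) (x - a) from rfl,
    integral_sub_right_eq_self (fun y : ℝ => Real.exp (-b * y ^ 2)) a]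
  exact integral_gaussian b

lemma Ip_gauss {c lam : ℝ} (hc : 0 < c) (hlam : 0 < lam) {m : ℝ} (hm : 0 < m) (a : ℝ)
    (F : ℝ → ℝ) (hF : ∀ x, F x = c * Real.exp (-(lam * (x - a) ^ 2))) :
    Ip m F = ENNReal.ofReal (c ^ m * Real.sqrt (Real.pi / (m * lam))) := by
  have h1 : ∀ x : ℝ, F x ^ m = c ^ m * Real.exp (-(m * lam) * (x - a) ^ 2) := fun x => by
    rw [hF x, gauss_pow hc]
  unfold Ip
  simp only [h1]
  exact lintegral_gauss (by positivity) _ a (by positivity)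

lemma eLpNormTop_gauss {c lam a : ℝ} (hc : 0 < c) (hlam : 0 < lam)
    (F : ℝ → ℝ) (hF : ∀ x, F x = c * Real.exp (-(lam * (x - a) ^ 2))) :
    eLpNorm F ⊤ volume = ENNReal.ofReal c := by
  rw [eLpNorm_exponent_top]
  refine le_antisymm ?_ ?_
  · refine eLpNormEssSup_le_of_ae_bound (C := c) (ae_of_all _ fun x => ?_)
    rw [hF x, Real.norm_eq_abs, abs_of_nonneg (by positivity)]
    calc c * Real.exp (-(lam * (x - a) ^ 2)) ≤ c * 1 := by
          gcongr
          exact Real.exp_le_one_iff.mpr (by nlinarith [sq_nonneg (x - a)])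
      _ = c := mul_one c
  · by_contra hlt
    push_neg at hlt
    set s := eLpNormEssSup F volume with hs
    have hstop : s ≠ ⊤ := (hlt.trans_le le_top).ne
    set u : ℝ := max s.toReal (c / 2) with hu
    have hsc : s.toReal < c := by
      have := (ENNReal.toReal_lt_toReal hstop ENNReal.ofReal_ne_top).mpr hlt
      rwa [ENNReal.toReal_ofReal hc.le] at this
    have huc : u < c := max_lt hsc (by linarith)
    have hu0 : 0 < u := lt_of_lt_of_le (by linarith) (le_max_right _ _)
    have hae : ∀ᵐ x ∂(volume : Measure ℝ), F x ≤ u := by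
      filter_upwards [ae_le_eLpNormEssSup (f := F) (μ := volume)] with x hx
      have hFx0 : 0 ≤ F x := by rw [hF x]; positivity
      have h2 : (ENNReal.ofReal (F x)) ≤ ENNReal.ofReal u := by
        calc ENNReal.ofReal (F x) = (‖F x‖₊ : ℝ≥0∞) := (enorm_of_nonneg hFx0).symm
          _ ≤ s := hx
          _ ≤ ENNReal.ofReal u := by
              rw [← ENNReal.ofReal_toReal hstop]
              exact ENNReal.ofReal_le_ofReal (le_max_left _ _)
      exact (ENNReal.ofReal_le_ofReal_iff hu0.le).mp h2
    set rr := Real.sqrt (Real.log (c / u) / lam) with hrr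
    have hlog : 0 < Real.log (c / u) := Real.log_pos (by rw [lt_div_iff₀ hu0]; linarith)
    have hrpos : 0 < rr := Real.sqrt_pos.mpr (by positivity)
    have hball : Metric.ball a rr ⊆ {x : ℝ | u < F x} := by
      intro x hx
      have hd : |x - a| < rr := by rwa [Metric.mem_ball, Real.dist_eq] at hx
      have h2 : (x - a) ^ 2 < Real.log (c / u) / lam := by
        calc (x - a) ^ 2 = |x - a| ^ 2 := (sq_abs _).symm
          _ < rr ^ 2 := by exact pow_lt_pow_left₀ hd (abs_nonneg _) (by norm_num)
          _ = Real.log (c / u) / lam := Real.sq_sqrt (by positivity)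
      have h3 : lam * (x - a) ^ 2 < Real.log (c / u) := by
        rw [mul_comm]
        exact (lt_div_iff₀ hlam).mp h2
      have h4 : Real.exp (-Real.log (c / u)) < Real.exp (-(lam * (x - a) ^ 2)) :=
        Real.exp_lt_exp.mpr (by linarith)
      have h5 : Real.exp (-Real.log (c / u)) = u / c := by
        rw [Real.exp_neg, Real.exp_log (by positivity), inv_div]
      show u < F x
      rw [hF x]
      have h6 : u / c < Real.exp (-(lam * (x - a) ^ 2)) := by rw [← h5]; exact h4
      calc u = c * (u / c) := by field_simp
        _ < c * Real.exp (-(lam * (x - a) ^ 2)) := by gcongr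
    have h0 : volume {x : ℝ | ¬ F x ≤ u} = 0 := by
      rw [← ae_iff]; exact hae
    have hsub : Metric.ball a rr ⊆ {x : ℝ | ¬ F x ≤ u} := fun x hx => not_le.mpr (hball hx)
    have hle := (measure_mono hsub).trans_eq h0
    have hpos : (0 : ℝ≥0∞) < volume (Metric.ball a rr) := Metric.measure_ball_pos _ _ hrpos
    exact absurd (le_antisymm hle zero_le) hpos.ne'

/-- Convert real set-integral bound to lintegral bound. -/
lemma lintegral_set_bound {p : ℝ} (hp : 0 < p) {f : ℝ → ℝ} (hf : ∀ x, 0 ≤ f x)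
    (hmem : MemLp f (ENNReal.ofReal p) volume) (S : Set ℝ) {B : ℝ}
    (hb : (∫ x in S, |f x| ^ p) ≤ B) :
    ∫⁻ x in S, ENNReal.ofReal (f x ^ p) ≤ ENNReal.ofReal B := by
  have habs : (fun x => |f x| ^ p) = fun x => f x ^ p := funext fun x => by
    rw [abs_of_nonneg (hf x)]
  rw [habs] at hb
  have hint : Integrable (fun x => f x ^ p) volume := by
    have h2 := hmem.integrable_norm_rpow (ofReal_ne_zero_of_pos hp) ENNReal.ofReal_ne_top
    rw [ENNReal.toReal_ofReal hp.le] at h2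
    have h3 : (fun x => ‖f x‖ ^ p) = fun x => f x ^ p := funext fun x => by
      rw [Real.norm_eq_abs, abs_of_nonneg (hf x)]
    rwa [h3] at h2
  rw [← ofReal_integral_eq_lintegral_ofReal hint.restrict
    (ae_of_all _ fun x => Real.rpow_nonneg (hf x) p)]
  exact ENNReal.ofReal_le_ofReal hb

/-- The small-values estimate. -/
lemma small_values {p : ℝ} (hp : 0 < p) {f : ℝ → ℝ} (hf : ∀ x, 0 ≤ f x)
    (hfm : Measurable f) (hIpf : Ip p f ≤ 1) {ρ s Θρ : ℝ} (hρ : 0 < ρ) (hs : 0 < s)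
    (hsmall : ∫⁻ x in {x : ℝ | f x < ρ⁻¹}, ENNReal.ofReal (f x ^ p) ≤ ENNReal.ofReal Θρ) :
    Ip p (fun x => min (f x) s) ≤ ENNReal.ofReal Θρ + ENNReal.ofReal ((s * ρ) ^ p) := by
  have hS : MeasurableSet {x : ℝ | f x < ρ⁻¹} := measurableSet_lt hfm measurable_const
  have hpoint : ∀ x : ℝ, ENNReal.ofReal (min (f x) s ^ p) ≤
      Set.indicator {x : ℝ | f x < ρ⁻¹} (fun x => ENNReal.ofReal (f x ^ p)) x
      + Set.indicator {x : ℝ | f x < ρ⁻¹}ᶜ (fun _ => ENNReal.ofReal (s ^ p)) x := by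
    intro x
    by_cases hx : f x < ρ⁻¹
    · rw [Set.indicator_of_mem (show x ∈ {x : ℝ | f x < ρ⁻¹} from hx)
        (fun x => ENNReal.ofReal (f x ^ p))]
      refine le_add_of_le_of_nonneg ?_ zero_le
      exact ENNReal.ofReal_le_ofReal
        (Real.rpow_le_rpow (le_min (hf x) hs.le) (min_le_left _ _) hp.le)
    · rw [Set.indicator_of_mem (show x ∈ {x : ℝ | f x < ρ⁻¹}ᶜ from hx)
        (fun _ => ENNReal.ofReal (s ^ p))]
      refine le_add_of_nonneg_of_le zero_le ?_
      exact ENNReal.ofReal_le_ofReal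
        (Real.rpow_le_rpow (le_min (hf x) hs.le) (min_le_right _ _) hp.le)
  have h1 : Ip p (fun x => min (f x) s) ≤
      (∫⁻ x in {x : ℝ | f x < ρ⁻¹}, ENNReal.ofReal (f x ^ p))
      + ENNReal.ofReal (s ^ p) * volume ({x : ℝ | f x < ρ⁻¹}ᶜ) := by
    calc Ip p (fun x => min (f x) s) ≤ ∫⁻ x, (Set.indicator {x : ℝ | f x < ρ⁻¹}
          (fun x => ENNReal.ofReal (f x ^ p)) x
          + Set.indicator {x : ℝ | f x < ρ⁻¹}ᶜ (fun _ => ENNReal.ofReal (s ^ p)) x) :=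
        lintegral_mono hpoint
      _ = (∫⁻ x, Set.indicator {x : ℝ | f x < ρ⁻¹} (fun x => ENNReal.ofReal (f x ^ p)) x)
          + ∫⁻ x, Set.indicator {x : ℝ | f x < ρ⁻¹}ᶜ (fun _ => ENNReal.ofReal (s ^ p)) x := by
        rw [lintegral_add_left]
        exact ((hfm.pow_const p).ennreal_ofReal).indicator hS
      _ = (∫⁻ x in {x : ℝ | f x < ρ⁻¹}, ENNReal.ofReal (f x ^ p))
          + ENNReal.ofReal (s ^ p) * volume ({x : ℝ | f x < ρ⁻¹}ᶜ) := by
        rw [lintegral_indicator hS, lintegral_indicator hS.compl, setLIntegral_const]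
  have hcompl : {x : ℝ | f x < ρ⁻¹}ᶜ = {x : ℝ | ρ⁻¹ ≤ f x} := by
    ext x; simp [not_lt]
  have hcheb : ENNReal.ofReal ((ρ⁻¹) ^ p) * volume {x : ℝ | ρ⁻¹ ≤ f x} ≤ 1 :=
    le_trans (cheb hp hfm.aemeasurable (by positivity)) hIpf
  have hvol : volume ({x : ℝ | f x < ρ⁻¹}ᶜ) ≤ (ENNReal.ofReal ((ρ⁻¹) ^ p))⁻¹ := by
    rw [hcompl, ENNReal.le_inv_iff_mul_le, mul_comm]
    exact hcheb
  have h2 : ENNReal.ofReal (s ^ p) * volume ({x : ℝ | f x < ρ⁻¹}ᶜ)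
      ≤ ENNReal.ofReal ((s * ρ) ^ p) := by
    calc ENNReal.ofReal (s ^ p) * volume ({x : ℝ | f x < ρ⁻¹}ᶜ)
        ≤ ENNReal.ofReal (s ^ p) * (ENNReal.ofReal ((ρ⁻¹) ^ p))⁻¹ :=
          mul_le_mul_right hvol _
      _ = ENNReal.ofReal ((s * ρ) ^ p) := by
          rw [← ENNReal.ofReal_inv_of_pos (by positivity), ← ENNReal.ofReal_mul (by positivity)]
          congr 1
          rw [Real.inv_rpow hρ.le, inv_inv, ← Real.mul_rpow hs.le hρ.le]
  exact h1.trans (add_le_add hsmall h2)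

lemma nrm_le_of_Ip_le {p E ε2 : ℝ} (hp : 0 < p) {g : ℝ → ℝ} (hg : ∀ x, 0 ≤ g x)
    (hE : 0 ≤ E) (hIp : Ip p g ≤ ENNReal.ofReal E) (hEε : E ^ p⁻¹ ≤ ε2) :
    (eLpNorm g (ENNReal.ofReal p) volume).toReal ≤ ε2 := by
  rw [eLpNorm_eq_Ip hp g hg]
  have h1 : Ip p g ^ (1/p) ≤ ENNReal.ofReal E ^ (1/p) :=
    ENNReal.rpow_le_rpow hIp (by positivity)
  have h2 : (ENNReal.ofReal E) ^ (1/p) = ENNReal.ofReal (E ^ (1/p)) :=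
    ENNReal.ofReal_rpow_of_nonneg hE (by positivity)
  calc (Ip p g ^ (1/p)).toReal ≤ (ENNReal.ofReal (E ^ (1/p))).toReal := by
        rw [← h2]
        exact ENNReal.toReal_mono (by rw [h2]; exact ENNReal.ofReal_ne_top) h1
    _ = E ^ (1/p) := ENNReal.toReal_ofReal (by positivity)
    _ ≤ ε2 := by rwa [one_div]

set_option maxHeartbeats 2000000 in
lemma core (p : ℝ) (hp : 1 < p) (Θ Rf : ℝ → ℝ) (hΘ : Tendsto Θ atTop (nhds 0))
    (hR : Tendsto Rf (nhdsWithin 0 (Ioi 0)) atTop) (ε : ℝ) (hε : 0 < ε) :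
    ∃ η₀ : ℝ, 0 < η₀ ∧ ∀ η : ℝ, 0 < η → η ≤ η₀ →
      ∃ δ₀ : ℝ, 0 < δ₀ ∧ ∀ δ : ℝ, 0 < δ → δ ≤ δ₀ →
      ∀ f fs F : ℝ → ℝ,
        MemLp f (ENNReal.ofReal p) volume → (∀ x, 0 ≤ f x) → nrm p f = 1 →
        IsNormalized Θ Rf p δ f → (∀ x, 0 ≤ F x) → IsGaussian F →
        IsRearrangement f fs → nrm p (fun x => fs x - F x) ≤ δ →
        nrm p (fun x => min (f x) η) + nrm p (fun x => max 0 (f x - (nrmInf F - η))) ≤ ε := by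
  have hp0 : 0 < p := by linarith
  -- the basic smallness target
  set E : ℝ := min ((ε/2) ^ p) 8⁻¹ with hEdef
  have hE0 : 0 < E := lt_min (Real.rpow_pos_of_pos (by linarith) p) (by norm_num)
  have hE8 : E ≤ 8⁻¹ := min_le_right _ _
  have hEε : E ^ p⁻¹ ≤ ε / 2 := by
    calc E ^ p⁻¹ ≤ ((ε/2) ^ p) ^ p⁻¹ :=
        Real.rpow_le_rpow hE0.le (min_le_left _ _) (by positivity)
      _ = ε / 2 := Real.rpow_rpow_inv (by linarith) hp0.ne'
  -- choose ρ with Θ ρ ≤ E/4 and ρ ≥ 1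
  obtain ⟨ρ₀, hρ₀⟩ := eventually_atTop.mp (hΘ.eventually_lt_const (show (0:ℝ) < E/4 by linarith))
  set ρ : ℝ := max ρ₀ 1 with hρdef
  have hρ1 : (1:ℝ) ≤ ρ := le_max_right _ _
  have hρpos : (0:ℝ) < ρ := by linarith
  have hΘρ : Θ ρ ≤ E/4 := (hρ₀ ρ (le_max_left _ _)).le
  -- lower bound for the Gaussian height, and for lambda
  set ρ₁ : ℝ := (8*ρ)⁻¹ with hρ₁def
  have hρ₁pos : 0 < ρ₁ := by positivity
  set lmin : ℝ := (Real.pi/p) * (ρ₁/2) ^ (2*p) with hlmindef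
  have hlmin : 0 < lmin := by positivity
  -- choose the Chebyshev exponent m
  set m : ℝ := max 1 (Real.pi/(lmin * (E/(8 * ρ ^ p))^2)) with hmdef
  have hm1 : (1:ℝ) ≤ m := le_max_left _ _
  have hm0 : 0 < m := by linarith
  have hρp : (0:ℝ) < ρ ^ p := Real.rpow_pos_of_pos hρpos p
  have hmbig : Real.sqrt (Real.pi/(m*lmin)) ≤ E/(8*ρ^p) := by
    have h1 : Real.pi/(lmin * (E/(8*ρ^p))^2) ≤ m := le_max_right _ _
    have hq : (0:ℝ) < E/(8*ρ^p) := by positivity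
    have h3 : Real.pi ≤ m * (lmin * (E/(8*ρ^p))^2) := (div_le_iff₀ (by positivity)).mp h1
    have h2 : Real.pi/(m*lmin) ≤ (E/(8*ρ^p))^2 := by
      rw [div_le_iff₀ (by positivity)]
      exact h3.trans (le_of_eq (by ring))
    calc Real.sqrt (Real.pi/(m*lmin)) ≤ Real.sqrt ((E/(8*ρ^p))^2) := Real.sqrt_le_sqrt h2
      _ = E/(8*ρ^p) := Real.sqrt_sq hq.le
  -- choose η₀
  have h2m : (0:ℝ) < 1 - 2 ^ (-(m⁻¹)) := by
    have h1 : (2:ℝ) ^ (-(m⁻¹)) < 1 :=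
      Real.rpow_lt_one_of_one_lt_of_neg one_lt_two (by simp [hm0, inv_pos])
    linarith
  set η₀ : ℝ := min ((E/4) ^ p⁻¹ / ρ) (min (ρ₁ * (1 - 2 ^ (-(m⁻¹))) / 2) (ρ₁/4)) with hη₀def
  have hη₀pos : 0 < η₀ := by
    refine lt_min (by positivity) (lt_min (by positivity) (by positivity))
  refine ⟨η₀, hη₀pos, fun η hη hηle => ?_⟩
  have hη1 : η * ρ ≤ (E/4) ^ p⁻¹ := by
    have := hηle.trans (min_le_left _ _)
    rw [le_div_iff₀ hρpos] at this
    linarith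
  have hη2 : 2*η ≤ ρ₁ * (1 - 2 ^ (-(m⁻¹))) := by
    have := hηle.trans ((min_le_right _ _).trans (min_le_left _ _))
    linarith
  have hη3 : η ≤ ρ₁/4 := hηle.trans ((min_le_right _ _).trans (min_le_right _ _))
  -- choose δ₀
  have hRev : ∀ᶠ δ in nhdsWithin 0 (Ioi 0), ρ ≤ Rf δ := hR.eventually (eventually_ge_atTop ρ)
  obtain ⟨δR, hδR, hδRsub⟩ := Metric.mem_nhdsWithin_iff.mp hRev
  set δ₀ : ℝ := min (δR/2) (min 8⁻¹ (η * (E/4) ^ p⁻¹ / ρ)) with hδ₀def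
  have hδ₀pos : 0 < δ₀ := lt_min (by linarith) (lt_min (by norm_num) (by positivity))
  refine ⟨δ₀, hδ₀pos, fun δ hδ hδle => ?_⟩
  have hRfδ : ρ ≤ Rf δ := by
    refine hδRsub ⟨?_, hδ⟩
    rw [Metric.mem_ball, Real.dist_eq, sub_zero, abs_of_pos hδ]
    have := hδle.trans (min_le_left _ _)
    linarith
  have hδ8 : δ ≤ 8⁻¹ := hδle.trans ((min_le_right _ _).trans (min_le_left _ _))
  have hδη : ρ * (δ/η) ≤ (E/4) ^ p⁻¹ := by
    have h1 : δ ≤ η * (E/4) ^ p⁻¹ / ρ := hδle.trans ((min_le_right _ _).trans (min_le_right _ _))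
    rw [le_div_iff₀ hρpos] at h1
    rw [mul_comm, div_mul_eq_mul_div, div_le_iff₀ hη]
    calc δ * ρ ≤ η * (E/4) ^ p⁻¹ := h1
      _ = (E/4) ^ p⁻¹ * η := mul_comm _ _
  -- now the functions
  intro f₀ fs F hmem₀ hf₀ hnrm₀ hnorm₀ hF0 hgauss hrearr₀ hclose
  -- replace f₀ by a measurable nonnegative representative f
  set f : ℝ → ℝ := fun x => max (hmem₀.1.mk f₀ x) 0 with hfdef
  have hfmeas : Measurable f := hmem₀.1.measurable_mk.max measurable_const
  have hff : f₀ =ᵐ[volume] f := hmem₀.1.ae_eq_mk.mono fun x hx => by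
    rw [hfdef]; dsimp only; rw [← hx, max_eq_left (hf₀ x)]
  have hf : ∀ x, 0 ≤ f x := fun x => le_max_right _ _
  have hmem : MemLp f (ENNReal.ofReal p) volume := hmem₀.ae_eq hff
  have hIpf : Ip p f = 1 := by
    refine Ip_eq_one hp0 hf hmem ?_
    rw [← eLpNorm_congr_ae hff]
    exact hnrm₀
  have hIpf' : Ip p f ≤ 1 := le_of_eq hIpf
  -- rearrangement data
  obtain ⟨hfs0, hfsmono, hfseq⟩ := hrearr₀
  have hfsmeas : Measurable fs := measurable_of_symm_decreasing hfsmono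
  have hfseq' : ∀ t : ℝ, 0 < t → volume {x | t < fs x} = volume {x | t < f x} := by
    intro t ht
    rw [hfseq t ht]
    refine measure_congr (hff.mono fun x hx => ?_)
    show (t < f₀ x) = (t < f x)
    rw [hx]
  have hIpfs : Ip p fs = 1 :=
    (Ip_congr_of_equimeasurable hp0 hfs0 hf hfsmeas.aemeasurable hfmeas.aemeasurable
      hfseq').trans hIpf
  have hmemfs : MemLp fs (ENNReal.ofReal p) volume :=
    ⟨hfsmeas.aestronglyMeasurable, by
      rw [eLpNorm_eq_Ip hp0 fs hfs0, hIpfs, ENNReal.one_rpow]; exact ENNReal.one_lt_top⟩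
  -- Gaussian data
  obtain ⟨c, lam, a, hc, hlam, hFx⟩ := hgauss
  have hFexp : F = fun x => c * Real.exp (-(lam * (x - a) ^ 2)) := funext hFx
  have hFmeas : Measurable F := by rw [hFexp]; fun_prop
  have hIpF : Ip p F = ENNReal.ofReal (c ^ p * Real.sqrt (Real.pi/(p*lam))) :=
    Ip_gauss hc hlam hp0 a F hFx
  have hmemF : MemLp F (ENNReal.ofReal p) volume := by
    refine ⟨hFmeas.aestronglyMeasurable, ?_⟩
    rw [eLpNorm_eq_Ip hp0 F hF0, hIpF]
    exact ENNReal.rpow_lt_top_of_nonneg (by positivity) ENNReal.ofReal_ne_top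
  have hnrmInfF : nrmInf F = c := by
    simp only [nrmInf]
    rw [eLpNormTop_gauss hc hlam F hFx, ENNReal.toReal_ofReal hc.le]
  -- closeness in lintegral form
  have hmemdiff : MemLp (fun x => fs x - F x) (ENNReal.ofReal p) volume := hmemfs.sub hmemF
  have heclose : eLpNorm (fun x => fs x - F x) (ENNReal.ofReal p) volume ≤ ENNReal.ofReal δ := by
    rw [← ENNReal.ofReal_toReal hmemdiff.2.ne]
    exact ENNReal.ofReal_le_ofReal hclose
  have hIdiff : ∫⁻ x, (‖fs x - F x‖₊ : ℝ≥0∞) ^ p ≤ ENNReal.ofReal (δ ^ p) := by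
    have h1 := ENNReal.rpow_le_rpow heclose hp0.le
    rw [eLpNorm_eq_lintegral_rpow_enorm_toReal (ofReal_ne_zero_of_pos hp0) ENNReal.ofReal_ne_top,
      ENNReal.toReal_ofReal hp0.le, one_div, ENNReal.rpow_inv_rpow hp0.ne'] at h1
    rwa [ENNReal.ofReal_rpow_of_nonneg hδ.le hp0.le] at h1
  -- normalized conditions in lintegral form (for f)
  have hnsmall : ∫⁻ x in {x : ℝ | f x < ρ⁻¹}, ENNReal.ofReal (f x ^ p)
      ≤ ENNReal.ofReal (Θ ρ) := by
    have h1 := (hnorm₀.2 ρ hρpos hRfδ).2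
    have h2 := lintegral_set_bound hp0 hf₀ hmem₀ _ h1
    have hseteq : {x : ℝ | |f₀ x| < ρ⁻¹} =ᵐ[volume] {x : ℝ | f x < ρ⁻¹} :=
      hff.mono fun x hx => by
        show (|f₀ x| < ρ⁻¹) = (f x < ρ⁻¹)
        rw [abs_of_nonneg (hf₀ x), hx]
    calc ∫⁻ x in {x : ℝ | f x < ρ⁻¹}, ENNReal.ofReal (f x ^ p)
        = ∫⁻ x in {x : ℝ | |f₀ x| < ρ⁻¹}, ENNReal.ofReal (f₀ x ^ p) := by
          rw [Measure.restrict_congr_set hseteq]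
          exact lintegral_congr_ae (ae_restrict_of_ae (hff.mono fun x hx => by simp only [hx]))
      _ ≤ ENNReal.ofReal (Θ ρ) := h2
  have hnlarge : ∫⁻ x in {x : ℝ | ρ < f x}, ENNReal.ofReal (f x ^ p)
      ≤ ENNReal.ofReal (Θ ρ) := by
    have h1 := (hnorm₀.2 ρ hρpos hRfδ).1
    have h2 := lintegral_set_bound hp0 hf₀ hmem₀ _ h1
    have hseteq : {x : ℝ | ρ < |f₀ x|} =ᵐ[volume] {x : ℝ | ρ < f x} :=
      hff.mono fun x hx => by
        show (ρ < |f₀ x|) = (ρ < f x)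
        rw [abs_of_nonneg (hf₀ x), hx]
    calc ∫⁻ x in {x : ℝ | ρ < f x}, ENNReal.ofReal (f x ^ p)
        = ∫⁻ x in {x : ℝ | ρ < |f₀ x|}, ENNReal.ofReal (f₀ x ^ p) := by
          rw [Measure.restrict_congr_set hseteq]
          exact lintegral_congr_ae (ae_restrict_of_ae (hff.mono fun x hx => by simp only [hx]))
      _ ≤ ENNReal.ofReal (Θ ρ) := h2
  -- pointwise bound for the Gaussian
  have hFle : ∀ x, F x ≤ c := fun x => by
    rw [hFx x]
    calc c * Real.exp (-(lam * (x - a) ^ 2)) ≤ c * 1 := by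
          gcongr
          exact Real.exp_le_one_iff.mpr (by nlinarith [sq_nonneg (x - a)])
      _ = c := mul_one c
  -- lower bound for c
  have hcρ₁ : ρ₁ ≤ c := by
    by_contra hcon
    push_neg at hcon
    have hA : MeasurableSet {x : ℝ | fs x < 2*c} := measurableSet_lt hfsmeas measurable_const
    have hsplit : (∫⁻ x in {x : ℝ | fs x < 2*c}, ENNReal.ofReal (fs x ^ p))
        + (∫⁻ x in {x : ℝ | fs x < 2*c}ᶜ, ENNReal.ofReal (fs x ^ p)) = 1 := by
      rw [lintegral_add_compl _ hA]; exact hIpfs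
    have heqmin : ∀ t : ℝ, 0 < t → volume {x | t < min (fs x) (2*c)}
        = volume {x | t < min (f x) (2*c)} := by
      intro t ht
      by_cases h2c : t < 2*c
      · have e1 : {x : ℝ | t < min (fs x) (2*c)} = {x : ℝ | t < fs x} := by
          ext x; simp [lt_min_iff, h2c]
        have e2 : {x : ℝ | t < min (f x) (2*c)} = {x : ℝ | t < f x} := by
          ext x; simp [lt_min_iff, h2c]
        rw [e1, e2]; exact hfseq' t ht
      · have e1 : {x : ℝ | t < min (fs x) (2*c)} = (∅ : Set ℝ) := by
          ext x; simp [lt_min_iff, h2c]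
        have e2 : {x : ℝ | t < min (f x) (2*c)} = (∅ : Set ℝ) := by
          ext x; simp [lt_min_iff, h2c]
        rw [e1, e2]
    have hAle : (∫⁻ x in {x : ℝ | fs x < 2*c}, ENNReal.ofReal (fs x ^ p))
        ≤ Ip p (fun x => min (f x) (2*c)) := by
      have e3 : ∫⁻ x in {x : ℝ | fs x < 2*c}, ENNReal.ofReal (fs x ^ p)
          = ∫⁻ x in {x : ℝ | fs x < 2*c}, ENNReal.ofReal (min (fs x) (2*c) ^ p) :=
        setLIntegral_congr_fun hA (fun x hx => by
          rw [min_eq_left (le_of_lt hx)])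
      rw [e3]
      calc ∫⁻ x in {x : ℝ | fs x < 2*c}, ENNReal.ofReal (min (fs x) (2*c) ^ p)
          ≤ ∫⁻ x, ENNReal.ofReal (min (fs x) (2*c) ^ p) := setLIntegral_le_lintegral _ _
        _ = Ip p (fun x => min (fs x) (2*c)) := rfl
        _ = Ip p (fun x => min (f x) (2*c)) :=
            Ip_congr_of_equimeasurable hp0 (fun x => le_min (hfs0 x) (by positivity))
              (fun x => le_min (hf x) (by positivity))
              (hfsmeas.min measurable_const).aemeasurable
              (hfmeas.min measurable_const).aemeasurable heqmin
    have hS := small_values hp0 hf hfmeas hIpf' hρpos (show (0:ℝ) < 2*c by positivity) hnsmall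
    have hBle : (∫⁻ x in {x : ℝ | fs x < 2*c}ᶜ, ENNReal.ofReal (fs x ^ p))
        ≤ ENNReal.ofReal ((2*δ) ^ p) := by
      have hgm : Measurable fun x => ENNReal.ofReal (2^p : ℝ) * (‖fs x - F x‖₊ : ℝ≥0∞) ^ p :=
        (measurable_const.mul (((hfsmeas.sub hFmeas).nnnorm.coe_nnreal_ennreal).pow_const p))
      have hstep : ∀ x ∈ {x : ℝ | fs x < 2*c}ᶜ, ENNReal.ofReal (fs x ^ p)
          ≤ ENNReal.ofReal (2^p : ℝ) * (‖fs x - F x‖₊ : ℝ≥0∞) ^ p := by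
        intro x hx
        have h2c : 2*c ≤ fs x := not_lt.mp hx
        have h3 : fs x ≤ 2*|fs x - F x| := by
          have h4 : F x ≤ c := hFle x
          rw [abs_of_nonneg (by linarith)]
          linarith
        calc ENNReal.ofReal (fs x ^ p) ≤ ENNReal.ofReal ((2*|fs x - F x|) ^ p) :=
            ENNReal.ofReal_le_ofReal (Real.rpow_le_rpow (hfs0 x) h3 hp0.le)
          _ = ENNReal.ofReal ((2:ℝ)^p * |fs x - F x| ^ p) := by
              rw [Real.mul_rpow (by norm_num) (abs_nonneg _)]
          _ = ENNReal.ofReal ((2:ℝ)^p) * ENNReal.ofReal (|fs x - F x| ^ p) :=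
              ENNReal.ofReal_mul (by positivity)
          _ = ENNReal.ofReal ((2:ℝ)^p) * (‖fs x - F x‖₊ : ℝ≥0∞) ^ p := by
              rw [enorm_abs, ENNReal.ofReal_rpow_of_nonneg (abs_nonneg _) hp0.le]
      calc (∫⁻ x in {x : ℝ | fs x < 2*c}ᶜ, ENNReal.ofReal (fs x ^ p))
          ≤ ∫⁻ x in {x : ℝ | fs x < 2*c}ᶜ,
              ENNReal.ofReal ((2:ℝ)^p) * (‖fs x - F x‖₊ : ℝ≥0∞) ^ p :=
            setLIntegral_mono hgm hstep
        _ ≤ ∫⁻ x, ENNReal.ofReal ((2:ℝ)^p) * (‖fs x - F x‖₊ : ℝ≥0∞) ^ p :=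
            setLIntegral_le_lintegral _ _
        _ = ENNReal.ofReal ((2:ℝ)^p) * ∫⁻ x, (‖fs x - F x‖₊ : ℝ≥0∞) ^ p := by
            rw [lintegral_const_mul]
            exact ((hfsmeas.sub hFmeas).nnnorm.coe_nnreal_ennreal).pow_const p
        _ ≤ ENNReal.ofReal ((2:ℝ)^p) * ENNReal.ofReal (δ ^ p) := mul_le_mul_right hIdiff _
        _ = ENNReal.ofReal ((2*δ) ^ p) := by
            rw [← ENNReal.ofReal_mul (by positivity), ← Real.mul_rpow (by norm_num) hδ.le]
    have hcontra : (1:ℝ≥0∞) ≤ ENNReal.ofReal (Θ ρ) + ENNReal.ofReal ((2*c*ρ) ^ p)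
        + ENNReal.ofReal ((2*δ) ^ p) := by
      rw [← hsplit]
      exact add_le_add (hAle.trans hS) hBle
    -- numeric contradiction
    have hb1 : ENNReal.ofReal (Θ ρ) ≤ ENNReal.ofReal (8⁻¹/4 : ℝ) :=
      ENNReal.ofReal_le_ofReal (by
        have : E/4 ≤ 8⁻¹/4 := by linarith
        linarith)
    have hb2 : ENNReal.ofReal ((2*c*ρ) ^ p) ≤ ENNReal.ofReal (4⁻¹ : ℝ) := by
      refine ENNReal.ofReal_le_ofReal ?_
      have h2cρ : 2*c*ρ ≤ 4⁻¹ := by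
        have : c < (8*ρ)⁻¹ := hcon
        have h8 : 2 * (8*ρ)⁻¹ * ρ = 4⁻¹ := by field_simp; ring
        have h9 : 2*c ≤ 2*(8*ρ)⁻¹ := by linarith
        calc 2*c*ρ ≤ 2*(8*ρ)⁻¹*ρ := mul_le_mul_of_nonneg_right h9 hρpos.le
          _ = 4⁻¹ := h8
      calc (2*c*ρ) ^ p ≤ (4⁻¹ : ℝ) ^ p := Real.rpow_le_rpow (by positivity) h2cρ hp0.le
        _ ≤ (4⁻¹ : ℝ) ^ (1:ℝ) := Real.rpow_le_rpow_of_exponent_ge (by norm_num) (by norm_num) hp.le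
        _ = 4⁻¹ := Real.rpow_one _
    have hb3 : ENNReal.ofReal ((2*δ) ^ p) ≤ ENNReal.ofReal (4⁻¹ : ℝ) := by
      refine ENNReal.ofReal_le_ofReal ?_
      have h2δ : 2*δ ≤ 4⁻¹ := by linarith
      calc (2*δ) ^ p ≤ (4⁻¹ : ℝ) ^ p := Real.rpow_le_rpow (by positivity) h2δ hp0.le
        _ ≤ (4⁻¹ : ℝ) ^ (1:ℝ) := Real.rpow_le_rpow_of_exponent_ge (by norm_num) (by norm_num) hp.le
        _ = 4⁻¹ := Real.rpow_one _
    have hfin : (1:ℝ≥0∞) ≤ ENNReal.ofReal (8⁻¹/4 : ℝ) + ENNReal.ofReal (4⁻¹ : ℝ)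
        + ENNReal.ofReal (4⁻¹ : ℝ) := hcontra.trans (add_le_add (add_le_add hb1 hb2) hb3)
    rw [← ENNReal.ofReal_add (by norm_num) (by norm_num),
      ← ENNReal.ofReal_add (by norm_num) (by norm_num), ← ENNReal.ofReal_one] at hfin
    have := (ENNReal.ofReal_le_ofReal_iff (by norm_num)).mp hfin
    norm_num at this
  -- lower bound for lam
  have hlam_min : lmin ≤ lam := by
    have heLfs : eLpNorm fs (ENNReal.ofReal p) volume = 1 := by
      rw [eLpNorm_eq_Ip hp0 fs hfs0, hIpfs, ENNReal.one_rpow]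
    have h1 : eLpNorm F (ENNReal.ofReal p) volume ≤ ENNReal.ofReal 2 := by
      have h2 : F = fun x => fs x + (F x - fs x) := funext fun x => by ring
      have hneg : (fun x => F x - fs x) = -(fun y : ℝ => fs y - F y) :=
        funext fun x => by simp only [Pi.neg_apply]; ring
      calc eLpNorm F (ENNReal.ofReal p) volume
          = eLpNorm (fun x => fs x + (F x - fs x)) (ENNReal.ofReal p) volume := by rw [← h2]
        _ ≤ eLpNorm fs (ENNReal.ofReal p) volume
            + eLpNorm (fun x => F x - fs x) (ENNReal.ofReal p) volume :=
            eLpNorm_add_le hmemfs.1 (hmemF.sub hmemfs).1 (by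
              rw [ENNReal.one_le_ofReal]; exact hp.le)
        _ = 1 + eLpNorm (fun x => fs x - F x) (ENNReal.ofReal p) volume := by
            rw [heLfs, hneg, eLpNorm_neg]
        _ ≤ 1 + ENNReal.ofReal δ := add_le_add_right heclose _
        _ ≤ ENNReal.ofReal 2 := by
            rw [← ENNReal.ofReal_one, ← ENNReal.ofReal_add (by norm_num) hδ.le]
            exact ENNReal.ofReal_le_ofReal (by
              have : δ ≤ 1 := by linarith [hδ8]
              linarith)
    have h3 : c ^ p * Real.sqrt (Real.pi/(p*lam)) ≤ 2 ^ p := by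
      have h4 := ENNReal.rpow_le_rpow h1 hp0.le
      rw [eLpNorm_eq_Ip hp0 F hF0, one_div, ENNReal.rpow_inv_rpow hp0.ne', hIpF,
        ENNReal.ofReal_rpow_of_nonneg (by norm_num) hp0.le] at h4
      exact (ENNReal.ofReal_le_ofReal_iff (by positivity)).mp h4
    have hcp : (0:ℝ) < c ^ p := Real.rpow_pos_of_pos hc p
    have h5 : Real.sqrt (Real.pi/(p*lam)) ≤ (2/c) ^ p := by
      rw [Real.div_rpow (by norm_num) hc.le, le_div_iff₀ hcp]
      calc Real.sqrt (Real.pi/(p*lam)) * c ^ p = c ^ p * Real.sqrt (Real.pi/(p*lam)) :=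
          mul_comm _ _
        _ ≤ 2 ^ p := h3
    have h6 : Real.pi/(p*lam) ≤ ((2/c) ^ p) ^ 2 := by
      have h7 := pow_le_pow_left₀ (Real.sqrt_nonneg _) h5 2
      rwa [Real.sq_sqrt (by positivity)] at h7
    have h7 : ((2/c) ^ p) ^ 2 = (2/c) ^ (2*p) := by
      rw [← Real.rpow_natCast ((2/c) ^ p) 2, ← Real.rpow_mul (by positivity)]
      norm_num [mul_comm]
    rw [h7] at h6
    have hApos : (0:ℝ) < (c/2) ^ (2*p) := Real.rpow_pos_of_pos (by positivity) _
    have hBpos : (0:ℝ) < (2/c) ^ (2*p) := Real.rpow_pos_of_pos (by positivity) _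
    have h9 : Real.pi ≤ (2/c) ^ (2*p) * (p * lam) := (div_le_iff₀ (by positivity)).mp h6
    have h10 : (c/2) ^ (2*p) * (2/c) ^ (2*p) = 1 := by
      rw [← Real.mul_rpow (by positivity) (by positivity),
        show c/2 * (2/c) = 1 from by field_simp, Real.one_rpow]
    have h8 : (Real.pi/p) * (c/2) ^ (2*p) ≤ lam := by
      rw [div_mul_eq_mul_div, div_le_iff₀ hp0]
      have h12 := mul_le_mul_of_nonneg_right h9 hApos.le
      have h11 : (2/c) ^ (2*p) * (p*lam) * (c/2) ^ (2*p) = p * lam := by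
        calc (2/c) ^ (2*p) * (p*lam) * (c/2) ^ (2*p)
            = ((c/2) ^ (2*p) * (2/c) ^ (2*p)) * (p*lam) := by ring
          _ = p * lam := by rw [h10, one_mul]
      rw [h11] at h12
      exact h12.trans_eq (mul_comm p lam)
    refine le_trans ?_ h8
    rw [hlmindef]
    have hbase : (ρ₁/2 : ℝ) ≤ c/2 := by linarith
    have := Real.rpow_le_rpow (by positivity) hbase (by positivity : (0:ℝ) ≤ 2*p)
    have hπp : (0:ℝ) ≤ Real.pi/p := by positivity
    exact mul_le_mul_of_nonneg_left this hπp
  -- SMALL VALUES FINAL BOUND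
  have hsmall_fin : (eLpNorm (fun x => min (f x) η) (ENNReal.ofReal p) volume).toReal ≤ ε/2 := by
    refine nrm_le_of_Ip_le hp0 (fun x => le_min (hf x) hη.le) hE0.le ?_ hEε
    have h1 := small_values hp0 hf hfmeas hIpf' hρpos hη hnsmall
    refine h1.trans ?_
    have h2 : (η * ρ) ^ p ≤ E/4 := by
      calc (η * ρ) ^ p ≤ ((E/4) ^ p⁻¹) ^ p :=
          Real.rpow_le_rpow (by positivity) hη1 hp0.le
        _ = E/4 := Real.rpow_inv_rpow (by positivity) hp0.ne'
    calc ENNReal.ofReal (Θ ρ) + ENNReal.ofReal ((η * ρ) ^ p)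
        ≤ ENNReal.ofReal (E/4) + ENNReal.ofReal (E/4) :=
          add_le_add (ENNReal.ofReal_le_ofReal hΘρ) (ENNReal.ofReal_le_ofReal h2)
      _ = ENNReal.ofReal (E/4 + E/4) := (ENNReal.ofReal_add (by positivity) (by positivity)).symm
      _ ≤ ENNReal.ofReal E := ENNReal.ofReal_le_ofReal (by linarith)
  -- LARGE VALUES FINAL BOUND
  have hβc : nrmInf F - η = c - η := by rw [hnrmInfF]
  set β : ℝ := c - η with hβdef
  have hβpos : 0 < β := by
    have : η ≤ ρ₁/4 := hη3
    simp only [hβdef]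
    linarith [hcρ₁]
  have hcmη : 0 < c - 2*η := by linarith [hcρ₁, hη3, hρ₁pos]
  -- Chebyshev bound on the Gaussian near its maximum
  have hgaussvol : volume {x : ℝ | c - 2*η ≤ F x} ≤ ENNReal.ofReal (E/(4*ρ^p)) := by
    have hIpFm : Ip m F = ENNReal.ofReal (c ^ m * Real.sqrt (Real.pi/(m*lam))) :=
      Ip_gauss hc hlam hm0 a F hFx
    have hch := cheb hm0 hFmeas.aemeasurable hcmη
    rw [hIpFm] at hch
    have hvol : volume {x : ℝ | c - 2*η ≤ F x}
        ≤ ENNReal.ofReal (c ^ m * Real.sqrt (Real.pi/(m*lam))) / ENNReal.ofReal ((c - 2*η) ^ m) := by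
      rw [ENNReal.le_div_iff_mul_le (Or.inl (ofReal_ne_zero_of_pos (by positivity)))
        (Or.inl ENNReal.ofReal_ne_top), mul_comm]
      exact hch
    refine hvol.trans ?_
    rw [← ENNReal.ofReal_div_of_pos (by positivity)]
    refine ENNReal.ofReal_le_ofReal ?_
    have hratio : (c/(c - 2*η)) ^ m ≤ 2 := by
      have hd : c - 2*η ≥ c * 2 ^ (-(m⁻¹)) := by
        have h2' : 2*η ≤ c * (1 - 2 ^ (-(m⁻¹))) := by
          calc 2*η ≤ ρ₁ * (1 - 2 ^ (-(m⁻¹))) := hη2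
            _ ≤ c * (1 - 2 ^ (-(m⁻¹))) := mul_le_mul_of_nonneg_right hcρ₁ h2m.le
        rw [mul_sub, mul_one] at h2'
        linarith
      have hpos2 : (0:ℝ) < 2 ^ (-(m⁻¹)) := Real.rpow_pos_of_pos (by norm_num) _
      have hq : c/(c - 2*η) ≤ 2 ^ (m⁻¹) := by
        rw [div_le_iff₀ hcmη]
        have : (2:ℝ) ^ (m⁻¹) * (c * 2 ^ (-(m⁻¹))) = c := by
          rw [show (2:ℝ) ^ (m⁻¹) * (c * 2 ^ (-(m⁻¹))) = c * (2 ^ (m⁻¹) * 2 ^ (-(m⁻¹))) from by ring,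
            ← Real.rpow_add (by norm_num)]
          simp
        have h12 := mul_le_mul_of_nonneg_left hd
          (Real.rpow_nonneg (by norm_num : (0:ℝ) ≤ 2) (m⁻¹))
        linarith [h12, this]
      calc (c/(c - 2*η)) ^ m ≤ ((2:ℝ) ^ (m⁻¹)) ^ m :=
          Real.rpow_le_rpow (by positivity) hq hm0.le
        _ = 2 := Real.rpow_inv_rpow (by norm_num) hm0.ne'
    have hsq : Real.sqrt (Real.pi/(m*lam)) ≤ E/(8*ρ^p) := by
      refine le_trans (Real.sqrt_le_sqrt ?_) hmbig
      gcongr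
    calc c ^ m * Real.sqrt (Real.pi/(m*lam)) / (c - 2*η) ^ m
        = (c/(c - 2*η)) ^ m * Real.sqrt (Real.pi/(m*lam)) := by
          rw [Real.div_rpow hc.le hcmη.le]; ring
      _ ≤ 2 * (E/(8*ρ^p)) := by
          refine mul_le_mul hratio hsq (Real.sqrt_nonneg _) (by norm_num)
      _ = E/(4*ρ^p) := by ring
  -- measure of the set where fs - F is at least η
  have hdiffvol : volume {x : ℝ | ENNReal.ofReal η ≤ (‖fs x - F x‖₊ : ℝ≥0∞)}
      ≤ ENNReal.ofReal ((δ/η) ^ p) := by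
    have hsub : {x : ℝ | ENNReal.ofReal η ≤ (‖fs x - F x‖₊ : ℝ≥0∞)}
        ⊆ {x : ℝ | ENNReal.ofReal (η ^ p) ≤ (‖fs x - F x‖₊ : ℝ≥0∞) ^ p} := by
      intro x hx
      have h1 : (ENNReal.ofReal η) ^ p ≤ ((‖fs x - F x‖₊ : ℝ≥0∞)) ^ p :=
        ENNReal.rpow_le_rpow hx hp0.le
      rwa [ENNReal.ofReal_rpow_of_nonneg hη.le hp0.le] at h1
    have hch := mul_meas_ge_le_lintegral₀ (μ := volume)
      (((hfsmeas.sub hFmeas).nnnorm.coe_nnreal_ennreal).pow_const p).aemeasurable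
      (ENNReal.ofReal (η ^ p))
    have h2 : ENNReal.ofReal (η ^ p) * volume {x : ℝ | ENNReal.ofReal η ≤ (‖fs x - F x‖₊ : ℝ≥0∞)}
        ≤ ENNReal.ofReal (δ ^ p) :=
      le_trans (le_trans (mul_le_mul_right (measure_mono hsub) _) hch) hIdiff
    have h3 : volume {x : ℝ | ENNReal.ofReal η ≤ (‖fs x - F x‖₊ : ℝ≥0∞)}
        ≤ ENNReal.ofReal (δ ^ p) / ENNReal.ofReal (η ^ p) := by
      rw [ENNReal.le_div_iff_mul_le (Or.inl (ofReal_ne_zero_of_pos (by positivity)))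
        (Or.inl ENNReal.ofReal_ne_top), mul_comm]
      exact h2
    refine h3.trans ?_
    rw [← ENNReal.ofReal_div_of_pos (by positivity), Real.div_rpow hδ.le hη.le]
  -- measure of the superlevel set of f
  have hfvol : volume {x : ℝ | β < f x} ≤ ENNReal.ofReal (E/(4*ρ^p)) + ENNReal.ofReal ((δ/η) ^ p) := by
    have h0 : volume {x : ℝ | β < f x} = volume {x : ℝ | β < fs x} := (hfseq' β hβpos).symm
    have hsub : {x : ℝ | β < fs x} ⊆ {x : ℝ | c - 2*η ≤ F x}
        ∪ {x : ℝ | ENNReal.ofReal η ≤ (‖fs x - F x‖₊ : ℝ≥0∞)} := by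
      intro x hx
      by_cases hFc : c - 2*η ≤ F x
      · exact Or.inl hFc
      · push_neg at hFc
        refine Or.inr ?_
        have h1 : η ≤ fs x - F x := by
          simp only [mem_setOf_eq] at hx
          rw [hβdef] at hx
          linarith
        show ENNReal.ofReal η ≤ (‖fs x - F x‖₊ : ℝ≥0∞)
        rw [enorm_abs]
        exact ENNReal.ofReal_le_ofReal (le_trans h1 (le_abs_self _))
    rw [h0]
    calc volume {x : ℝ | β < fs x}
        ≤ volume ({x : ℝ | c - 2*η ≤ F x}
          ∪ {x : ℝ | ENNReal.ofReal η ≤ (‖fs x - F x‖₊ : ℝ≥0∞)}) := measure_mono hsub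
      _ ≤ volume {x : ℝ | c - 2*η ≤ F x}
          + volume {x : ℝ | ENNReal.ofReal η ≤ (‖fs x - F x‖₊ : ℝ≥0∞)} := measure_union_le _ _
      _ ≤ ENNReal.ofReal (E/(4*ρ^p)) + ENNReal.ofReal ((δ/η) ^ p) :=
          add_le_add hgaussvol hdiffvol
  -- the large-values integral bound
  have hlarge_fin : (eLpNorm (fun x => max 0 (f x - β)) (ENNReal.ofReal p) volume).toReal
      ≤ ε/2 := by
    refine nrm_le_of_Ip_le hp0 (fun x => le_max_left _ _) hE0.le ?_ hEε
    have hSlarge : MeasurableSet {x : ℝ | ρ < f x} := measurableSet_lt measurable_const hfmeas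
    have hSβ : MeasurableSet {x : ℝ | β < f x} := measurableSet_lt measurable_const hfmeas
    have hpoint : ∀ x : ℝ, ENNReal.ofReal (max 0 (f x - β) ^ p)
        ≤ Set.indicator {x : ℝ | ρ < f x} (fun x => ENNReal.ofReal (f x ^ p)) x
          + Set.indicator {x : ℝ | β < f x} (fun _ => ENNReal.ofReal (ρ ^ p)) x := by
      intro x
      by_cases hxβ : β < f x
      · have hmax : max 0 (f x - β) = f x - β := max_eq_right (by linarith)
        by_cases hxρ : ρ < f x
        · rw [Set.indicator_of_mem (show x ∈ {x : ℝ | ρ < f x} from hxρ)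
            (fun x => ENNReal.ofReal (f x ^ p))]
          refine le_add_of_le_of_nonneg ?_ zero_le
          rw [hmax]
          exact ENNReal.ofReal_le_ofReal
            (Real.rpow_le_rpow (by linarith) (by linarith [hβpos]) hp0.le)
        · push_neg at hxρ
          rw [Set.indicator_of_mem (show x ∈ {x : ℝ | β < f x} from hxβ)
            (fun _ => ENNReal.ofReal (ρ ^ p))]
          refine le_add_of_nonneg_of_le zero_le ?_
          rw [hmax]
          exact ENNReal.ofReal_le_ofReal
            (Real.rpow_le_rpow (by linarith) (by linarith [hβpos]) hp0.le)
      · push_neg at hxβ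
        have hmax : max 0 (f x - β) = 0 := max_eq_left (by linarith)
        rw [hmax, Real.zero_rpow hp0.ne', ENNReal.ofReal_zero]
        exact zero_le
    have h1 : Ip p (fun x => max 0 (f x - β))
        ≤ (∫⁻ x in {x : ℝ | ρ < f x}, ENNReal.ofReal (f x ^ p))
          + ENNReal.ofReal (ρ ^ p) * volume {x : ℝ | β < f x} := by
      calc Ip p (fun x => max 0 (f x - β))
          ≤ ∫⁻ x, (Set.indicator {x : ℝ | ρ < f x} (fun x => ENNReal.ofReal (f x ^ p)) x
            + Set.indicator {x : ℝ | β < f x} (fun _ => ENNReal.ofReal (ρ ^ p)) x) :=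
          lintegral_mono hpoint
        _ = (∫⁻ x, Set.indicator {x : ℝ | ρ < f x} (fun x => ENNReal.ofReal (f x ^ p)) x)
            + ∫⁻ x, Set.indicator {x : ℝ | β < f x} (fun _ => ENNReal.ofReal (ρ ^ p)) x := by
          rw [lintegral_add_left]
          exact ((hfmeas.pow_const p).ennreal_ofReal).indicator hSlarge
        _ = (∫⁻ x in {x : ℝ | ρ < f x}, ENNReal.ofReal (f x ^ p))
            + ENNReal.ofReal (ρ ^ p) * volume {x : ℝ | β < f x} := by
          rw [lintegral_indicator hSlarge, lintegral_indicator hSβ, setLIntegral_const]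
    refine h1.trans ?_
    have h2 : ENNReal.ofReal (ρ ^ p) * volume {x : ℝ | β < f x}
        ≤ ENNReal.ofReal (E/4 + E/4) := by
      calc ENNReal.ofReal (ρ ^ p) * volume {x : ℝ | β < f x}
          ≤ ENNReal.ofReal (ρ ^ p) * (ENNReal.ofReal (E/(4*ρ^p)) + ENNReal.ofReal ((δ/η) ^ p)) :=
            mul_le_mul_right hfvol _
        _ = ENNReal.ofReal (ρ ^ p * (E/(4*ρ^p)) + ρ ^ p * (δ/η) ^ p) := by
            rw [mul_add, ← ENNReal.ofReal_mul (by positivity), ← ENNReal.ofReal_mul (by positivity),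
              ← ENNReal.ofReal_add (by positivity) (by positivity)]
        _ ≤ ENNReal.ofReal (E/4 + E/4) := by
            refine ENNReal.ofReal_le_ofReal (add_le_add ?_ ?_)
            · rw [show ρ ^ p * (E/(4*ρ^p)) = E/4 * (ρ^p/ρ^p) from by ring, div_self hρp.ne']
              rw [mul_one]
            · have h3 : ρ * (δ/η) ≥ 0 := by positivity
              calc ρ ^ p * (δ/η) ^ p = (ρ * (δ/η)) ^ p :=
                  (Real.mul_rpow hρpos.le (by positivity)).symm
                _ ≤ ((E/4) ^ p⁻¹) ^ p := Real.rpow_le_rpow h3 hδη hp0.le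
                _ = E/4 := Real.rpow_inv_rpow (by positivity) hp0.ne'
    calc (∫⁻ x in {x : ℝ | ρ < f x}, ENNReal.ofReal (f x ^ p))
        + ENNReal.ofReal (ρ ^ p) * volume {x : ℝ | β < f x}
        ≤ ENNReal.ofReal (Θ ρ) + ENNReal.ofReal (E/4 + E/4) := add_le_add hnlarge h2
      _ ≤ ENNReal.ofReal (E/4) + ENNReal.ofReal (E/4 + E/4) :=
          add_le_add_left (ENNReal.ofReal_le_ofReal hΘρ) _
      _ = ENNReal.ofReal (E/4 + (E/4 + E/4)) :=
          (ENNReal.ofReal_add (by positivity) (by positivity)).symm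
      _ ≤ ENNReal.ofReal E := ENNReal.ofReal_le_ofReal (by linarith)
  -- put everything together, transferring back to f₀
  have e1 : nrm p (fun x => min (f₀ x) η)
      = (eLpNorm (fun x => min (f x) η) (ENNReal.ofReal p) volume).toReal := by
    simp only [nrm]
    congr 1
    exact eLpNorm_congr_ae (hff.mono fun x hx => by simp only [hx])
  have e2 : nrm p (fun x => max 0 (f₀ x - (nrmInf F - η)))
      = (eLpNorm (fun x => max 0 (f x - β)) (ENNReal.ofReal p) volume).toReal := by
    simp only [nrm]
    congr 1
    refine eLpNorm_congr_ae (hff.mono fun x hx => ?_)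
    simp only [hx, hβc]
  rw [e1, e2]
  linarith [hsmall_fin, hlarge_fin]


end YoungAux

theorem small_and_large_values_negligible (p q r : ℝ) (hp : 1 < p) (hq : 1 < q) (hr : 1 < r)
    (hpqr : 1/p + 1/q + 1/r = 2)
    (Θ Rf : ℝ → ℝ) (hΘ : Tendsto Θ atTop (nhds 0))
    (hR : Tendsto Rf (nhdsWithin 0 (Ioi 0)) atTop)
    (ε : ℝ) (hε : 0 < ε) :
    ∃ η₀ : ℝ, 0 < η₀ ∧ ∀ η : ℝ, 0 < η → η ≤ η₀ →
      ∃ δ₀ : ℝ, 0 < δ₀ ∧ ∀ δ : ℝ, 0 < δ → δ ≤ δ₀ →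
        -- first component, with exponent p:
        (∀ f fs F : ℝ → ℝ,
          MemLp f (ENNReal.ofReal p) volume → (∀ x, 0 ≤ f x) → nrm p f = 1 →
          IsNormalized Θ Rf p δ f →
          (∀ x, 0 ≤ F x) → IsGaussian F →
          (∃ G H : ℝ → ℝ, ExtremizingTriple p q r F G H) →
          IsRearrangement f fs → nrm p (fun x => fs x - F x) ≤ δ →
          nrm p (fun x => min (f x) η) +
            nrm p (fun x => max 0 (f x - (nrmInf F - η))) ≤ ε) ∧
        -- second component, with exponent q:
        (∀ g gs G : ℝ → ℝ,
          MemLp g (ENNReal.ofReal q) volume → (∀ x, 0 ≤ g x) → nrm q g = 1 →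
          IsNormalized Θ Rf q δ g →
          (∀ x, 0 ≤ G x) → IsGaussian G →
          (∃ F H : ℝ → ℝ, ExtremizingTriple p q r F G H) →
          IsRearrangement g gs → nrm q (fun x => gs x - G x) ≤ δ →
          nrm q (fun x => min (g x) η) +
            nrm q (fun x => max 0 (g x - (nrmInf G - η))) ≤ ε) ∧
        -- third component, with exponent r:
        (∀ h hs H : ℝ → ℝ,
          MemLp h (ENNReal.ofReal r) volume → (∀ x, 0 ≤ h x) → nrm r h = 1 →
          IsNormalized Θ Rf r δ h →
          (∀ x, 0 ≤ H x) → IsGaussian H →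
          (∃ F G : ℝ → ℝ, ExtremizingTriple p q r F G H) →
          IsRearrangement h hs → nrm r (fun x => hs x - H x) ≤ δ →
          nrm r (fun x => min (h x) η) +
            nrm r (fun x => max 0 (h x - (nrmInf H - η))) ≤ ε) := by
  obtain ⟨ηp, hηp, Hp⟩ := YoungAux.core p hp Θ Rf hΘ hR ε hε
  obtain ⟨ηq, hηq, Hq⟩ := YoungAux.core q hq Θ Rf hΘ hR ε hε
  obtain ⟨ηr, hηr, Hr⟩ := YoungAux.core r hr Θ Rf hΘ hR ε hε
  refine ⟨min ηp (min ηq ηr), lt_min hηp (lt_min hηq hηr), fun η hη hηle => ?_⟩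
  obtain ⟨δp, hδp, Hp'⟩ := Hp η hη (hηle.trans (min_le_left _ _))
  obtain ⟨δq, hδq, Hq'⟩ := Hq η hη (hηle.trans ((min_le_right _ _).trans (min_le_left _ _)))
  obtain ⟨δr, hδr, Hr'⟩ := Hr η hη (hηle.trans ((min_le_right _ _).trans (min_le_right _ _)))
  refine ⟨min δp (min δq δr), lt_min hδp (lt_min hδq hδr), fun δ hδ hδle => ?_⟩
  refine ⟨?_, ?_, ?_⟩
  · intro f fs F h1 h2 h3 h4 h5 h6 _ h8 h9
    exact Hp' δ hδ (hδle.trans (min_le_left _ _)) f fs F h1 h2 h3 h4 h5 h6 h8 h9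
  · intro g gs G h1 h2 h3 h4 h5 h6 _ h8 h9
    exact Hq' δ hδ (hδle.trans ((min_le_right _ _).trans (min_le_left _ _)))
      g gs G h1 h2 h3 h4 h5 h6 h8 h9
  · intro h hs H h1 h2 h3 h4 h5 h6 _ h8 h9
    exact Hr' δ hδ (hδle.trans ((min_le_right _ _).trans (min_le_right _ _)))
      h hs H h1 h2 h3 h4 h5 h6 h8 h9
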